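/- arXiv:2101.02307 — 4 statements merged into one kernel-verified Lean document; each statement's English description precedes it below -/
import Mathlib

section
/- Let Ω = Π_r P Π_c' where Π_r ∈ ℝ^{n_r×K}, Π_c ∈ ℝ^{n_c×K} are membership matrices (rows are PMFs), P ∈ ℝ^{K×K} has rank K, and each row/column community has at least one pure node. Let Ω = UΛV' be the compact SVD with U ∈ ℝ^{n_r×K}. Let I_r be an index set of K pure row nodes, one per community, with Π_r(I_r,:) = I_K. Then U = Π_r U(I_r,:), i.e., every row of U is the corresponding convex combination of the K rows of B_r := U(I_r,:). -/
open Matrix Finset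

/-- Row Ideal Simplex. Under DiMMSB, with Ω = Π_r P Π_c' and compact SVD
Ω = U Λ V', and I_r indexing one pure row node per community with Π_r(I_r,:) = I_K,
we have U = Π_r U(I_r,:). -/
theorem row_ideal_simplex {nr nc K : ℕ}
    (Pr : Matrix (Fin nr) (Fin K) ℝ) (Pc : Matrix (Fin nc) (Fin K) ℝ)
    (P : Matrix (Fin K) (Fin K) ℝ)
    (hPrn : ∀ i k, 0 ≤ Pr i k) (hPrs : ∀ i, ∑ k, Pr i k = 1)
    (hPcn : ∀ j k, 0 ≤ Pc j k) (hPcs : ∀ j, ∑ k, Pc j k = 1)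
    (hP : IsUnit P)
    (hpureCol : ∀ k, ∃ j, Pc j k = 1)
    (U : Matrix (Fin nr) (Fin K) ℝ) (L : Matrix (Fin K) (Fin K) ℝ)
    (V : Matrix (Fin nc) (Fin K) ℝ)
    (hSVD : Pr * P * Pcᵀ = U * L * Vᵀ)
    (hU : Uᵀ * U = 1) (hV : Vᵀ * V = 1)
    (hLdiag : ∀ i j, i ≠ j → L i j = 0) (hL : IsUnit L)
    (Ir : Fin K → Fin nr) (hIr : Pr.submatrix Ir id = 1) :
    U = Pr * U.submatrix Ir id := by
  have hLdet : IsUnit L.det := (Matrix.isUnit_iff_isUnit_det L).mp hL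
  have hLinv : L * L⁻¹ = 1 := Matrix.mul_nonsing_inv L hLdet
  have h1 : Pr * P * Pcᵀ * V = U * L := by
    rw [hSVD, Matrix.mul_assoc (U * L) Vᵀ V, hV, Matrix.mul_one]
  have key : U = Pr * (P * Pcᵀ * V * L⁻¹) := by
    calc U = U * L * L⁻¹ := by rw [Matrix.mul_assoc, hLinv, Matrix.mul_one]
    _ = Pr * P * Pcᵀ * V * L⁻¹ := by rw [h1]
    _ = Pr * (P * Pcᵀ * V * L⁻¹) := by
      rw [Matrix.mul_assoc Pr P Pcᵀ, Matrix.mul_assoc Pr (P * Pcᵀ) V,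
        Matrix.mul_assoc Pr (P * Pcᵀ * V) L⁻¹, Matrix.mul_assoc (P * Pcᵀ) V L⁻¹]
  have hsub : U.submatrix Ir id = P * Pcᵀ * V * L⁻¹ := by
    have : U.submatrix Ir id = (Pr.submatrix Ir id) * (P * Pcᵀ * V * L⁻¹) := by
      rw [key]
      ext i j
      simp [Matrix.mul_apply, Matrix.submatrix_apply]
    rw [this, hIr, one_mul]
  rw [hsub, ← key]
end

section
/- Under the same setup, with V the matrix of right singular vectors of Ω = Π_r P Π_c', and I_c an index set of K pure column nodes with Π_c(I_c,:) = I_K, we have V = Π_c V(I_c,:). -/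
open Matrix Finset

/-- Column Ideal Simplex. Under the same setup, with V the right singular
matrix of Ω = Π_r P Π_c' and I_c indexing pure column nodes with Π_c(I_c,:) = I_K,
we have V = Π_c V(I_c,:). -/
theorem column_ideal_simplex {nr nc K : ℕ}
    (Pr : Matrix (Fin nr) (Fin K) ℝ) (Pc : Matrix (Fin nc) (Fin K) ℝ)
    (P : Matrix (Fin K) (Fin K) ℝ)
    (hPrn : ∀ i k, 0 ≤ Pr i k) (hPrs : ∀ i, ∑ k, Pr i k = 1)
    (hPcn : ∀ j k, 0 ≤ Pc j k) (hPcs : ∀ j, ∑ k, Pc j k = 1)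
    (hP : IsUnit P)
    (hpureRow : ∀ k, ∃ i, Pr i k = 1)
    (U : Matrix (Fin nr) (Fin K) ℝ) (L : Matrix (Fin K) (Fin K) ℝ)
    (V : Matrix (Fin nc) (Fin K) ℝ)
    (hSVD : Pr * P * Pcᵀ = U * L * Vᵀ)
    (hU : Uᵀ * U = 1) (hV : Vᵀ * V = 1)
    (hLdiag : ∀ i j, i ≠ j → L i j = 0) (hL : IsUnit L)
    (Ic : Fin K → Fin nc) (hIc : Pc.submatrix Ic id = 1) :
    V = Pc * V.submatrix Ic id := by
  have hLdet : IsUnit L.det := (Matrix.isUnit_iff_isUnit_det L).mp hL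
  set M : Matrix (Fin K) (Fin K) ℝ := L⁻¹ * Uᵀ * (Pr * P) with hM
  have hVt : Vᵀ = M * Pcᵀ := by
    have h1 : (1 : Matrix (Fin K) (Fin K) ℝ) * Vᵀ = Vᵀ := Matrix.one_mul _
    calc Vᵀ = (1 : Matrix (Fin K) (Fin K) ℝ) * Vᵀ := h1.symm
      _ = (L⁻¹ * L) * Vᵀ := by rw [Matrix.nonsing_inv_mul L hLdet]
      _ = (L⁻¹ * ((1 : Matrix (Fin K) (Fin K) ℝ) * L)) * Vᵀ := by rw [Matrix.one_mul]
      _ = (L⁻¹ * ((Uᵀ * U) * L)) * Vᵀ := by rw [hU]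
      _ = L⁻¹ * Uᵀ * (U * L * Vᵀ) := by
            simp only [Matrix.mul_assoc]
      _ = L⁻¹ * Uᵀ * (Pr * P * Pcᵀ) := by rw [hSVD]
      _ = M * Pcᵀ := by rw [hM]; simp only [Matrix.mul_assoc]
  have hVeq : V = Pc * Mᵀ := by
    have := congrArg Matrix.transpose hVt
    simpa [Matrix.transpose_mul] using this
  have hsub : V.submatrix Ic id = Mᵀ := by
    rw [hVeq]
    have : (Pc * Mᵀ).submatrix Ic id = Pc.submatrix Ic id * Mᵀ := by
      have := Matrix.submatrix_mul_equiv Pc Mᵀ Ic (Equiv.refl (Fin K)) id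
      simpa using this.symm
    rw [this, hIc, one_mul]
  rw [hsub, ← hVeq]
end

section
/- Suppose U ∈ ℝ^{n_r×K} has orthonormal columns and U = Π_r B_r where Π_r is a membership matrix (rows are PMFs) and B_r ∈ ℝ^{K×K} is invertible. Then for every row i, √(1/(K·λ_1(Π_r'Π_r))) ≤ ‖U(i,:)‖_2 ≤ √(1/λ_K(Π_r'Π_r)). -/
open Matrix Finset

lemma inv_spectral {K : ℕ} {M : Matrix (Fin K) (Fin K) ℝ} (hM : M.IsHermitian)
    (hPD : M.PosDef) :
    M⁻¹ = (hM.eigenvectorUnitary : Matrix (Fin K) (Fin K) ℝ) *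
      diagonal (fun j => (hM.eigenvalues j)⁻¹) *
      (star (hM.eigenvectorUnitary : Matrix (Fin K) (Fin K) ℝ)) := by
  set V := (hM.eigenvectorUnitary : Matrix (Fin K) (Fin K) ℝ)
  have hVW : V * star V = 1 := Matrix.mem_unitaryGroup_iff.mp hM.eigenvectorUnitary.2
  have hWV : star V * V = 1 := Matrix.mem_unitaryGroup_iff'.mp hM.eigenvectorUnitary.2
  have hdiag : diagonal (RCLike.ofReal ∘ hM.eigenvalues) = diagonal hM.eigenvalues := by
    congr 1
  apply Matrix.inv_eq_right_inv
  have hmul : (fun i => hM.eigenvalues i * (hM.eigenvalues i)⁻¹) = fun _ : Fin K => (1:ℝ) :=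
    funext fun j => mul_inv_cancel₀ (hPD.eigenvalues_pos j).ne'
  calc M * (V * diagonal (fun j => (hM.eigenvalues j)⁻¹) * star V)
      = V * diagonal hM.eigenvalues * star V *
        (V * diagonal (fun j => (hM.eigenvalues j)⁻¹) * star V) := by
        conv_lhs => arg 1; rw [hM.spectral_theorem]
        rw [Unitary.conjStarAlgAut_apply, hdiag]
    _ = V * (diagonal hM.eigenvalues * ((star V * V) *
          diagonal (fun j => (hM.eigenvalues j)⁻¹))) * star V := by
        noncomm_ring
    _ = 1 := by
        rw [hWV, one_mul, diagonal_mul_diagonal, hmul]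
        rw [diagonal_one, mul_one, hVW]

lemma rayleigh_inv {K : ℕ} (hK : 0 < K) {M : Matrix (Fin K) (Fin K) ℝ}
    (hM : M.IsHermitian) (hPD : M.PosDef) (x : Fin K → ℝ) :
    0 < (⨅ j, hM.eigenvalues j) ∧ 0 < (⨆ j, hM.eigenvalues j) ∧
    (⨆ j, hM.eigenvalues j)⁻¹ * (x ⬝ᵥ x) ≤ x ⬝ᵥ (M⁻¹ *ᵥ x) ∧
    x ⬝ᵥ (M⁻¹ *ᵥ x) ≤ (⨅ j, hM.eigenvalues j)⁻¹ * (x ⬝ᵥ x) := by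
  haveI : Nonempty (Fin K) := Fin.pos_iff_nonempty.mp hK
  set V := (hM.eigenvectorUnitary : Matrix (Fin K) (Fin K) ℝ) with hV
  have hVW : V * star V = 1 := Matrix.mem_unitaryGroup_iff.mp hM.eigenvectorUnitary.2
  have hstar : star V = Vᵀ := by
    ext i j
    simp [Matrix.star_apply]
  set c : Fin K → ℝ := star V *ᵥ x with hc
  -- quadratic form in eigen-coordinates
  have h1 : x ⬝ᵥ (M⁻¹ *ᵥ x) = ∑ j, (hM.eigenvalues j)⁻¹ * (c j)^2 := by
    rw [inv_spectral hM hPD, ← mulVec_mulVec, ← mulVec_mulVec, Matrix.dotProduct_mulVec x V]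
    have hxv : x ᵥ* V = c := by rw [hc, hstar, mulVec_transpose]
    rw [hxv]
    simp [dotProduct, mulVec_diagonal]
    congr 1
    funext j
    ring
  -- norms agree
  have h2 : c ⬝ᵥ c = x ⬝ᵥ x := by
    rw [hc, Matrix.dotProduct_mulVec _ (star V) x, hstar, vecMul_transpose, ← hstar,
      mulVec_mulVec, hVW, one_mulVec]
  have hcc : c ⬝ᵥ c = ∑ j, (c j)^2 := by simp [dotProduct, sq]
  -- min and max eigenvalues
  obtain ⟨j0, hj0⟩ := Finite.exists_min hM.eigenvalues
  obtain ⟨j1, hj1⟩ := Finite.exists_max hM.eigenvalues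
  have hInf : (⨅ j, hM.eigenvalues j) = hM.eigenvalues j0 :=
    le_antisymm (ciInf_le (Set.finite_range _).bddBelow j0) (le_ciInf hj0)
  have hSup : (⨆ j, hM.eigenvalues j) = hM.eigenvalues j1 :=
    le_antisymm (ciSup_le hj1) (le_ciSup (Set.finite_range _).bddAbove j1)
  have hpos0 : 0 < hM.eigenvalues j0 := hPD.eigenvalues_pos j0
  have hpos1 : 0 < hM.eigenvalues j1 := hPD.eigenvalues_pos j1
  refine ⟨hInf ▸ hpos0, hSup ▸ hpos1, ?_, ?_⟩
  · calc (⨆ j, hM.eigenvalues j)⁻¹ * (x ⬝ᵥ x)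
        = ∑ j, (hM.eigenvalues j1)⁻¹ * (c j)^2 := by
          rw [← h2, hcc, hSup, mul_sum]
      _ ≤ ∑ j, (hM.eigenvalues j)⁻¹ * (c j)^2 :=
          Finset.sum_le_sum fun j _ => mul_le_mul_of_nonneg_right
            (inv_anti₀ (hPD.eigenvalues_pos j) (hj1 j)) (sq_nonneg _)
      _ = x ⬝ᵥ (M⁻¹ *ᵥ x) := h1.symm
  · calc x ⬝ᵥ (M⁻¹ *ᵥ x)
        = ∑ j, (hM.eigenvalues j)⁻¹ * (c j)^2 := h1
      _ ≤ ∑ j, (hM.eigenvalues j0)⁻¹ * (c j)^2 :=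
          Finset.sum_le_sum fun j _ => mul_le_mul_of_nonneg_right
            (inv_anti₀ hpos0 (hj0 j)) (sq_nonneg _)
      _ = (⨅ j, hM.eigenvalues j)⁻¹ * (x ⬝ᵥ x) := by
          rw [← h2, hcc, hInf, mul_sum]

/-- Row norm bounds on the singular vector matrix:
√(1/(K λ₁(Π_r'Π_r))) ≤ ‖U(i,:)‖₂ ≤ √(1/λ_K(Π_r'Π_r)). -/
theorem row_norm_bounds {nr K : ℕ} (hK : 0 < K)
    (U Pr : Matrix (Fin nr) (Fin K) ℝ) (Br : Matrix (Fin K) (Fin K) ℝ)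
    (hUU : Uᵀ * U = 1) (hU : U = Pr * Br) (hBr : IsUnit Br)
    (hnn : ∀ i k, 0 ≤ Pr i k) (hsum : ∀ i, ∑ k, Pr i k = 1)
    (hPP : (Prᵀ * Pr).IsHermitian) (hPD : (Prᵀ * Pr).PosDef) :
    ∀ i : Fin nr,
      Real.sqrt (1 / (K * ⨆ j, hPP.eigenvalues j)) ≤ Real.sqrt (∑ k, (U i k) ^ 2) ∧
      Real.sqrt (∑ k, (U i k) ^ 2) ≤ Real.sqrt (1 / ⨅ j, hPP.eigenvalues j) := by
  intro i
  set M := Prᵀ * Pr with hM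
  set x : Fin K → ℝ := Pr i with hx
  -- M⁻¹ = Br * Brᵀ
  have hdet : IsUnit Brᵀ.det := by
    rw [Matrix.det_transpose]
    exact (Matrix.isUnit_iff_isUnit_det Br).mp hBr
  have h1 : Brᵀ * (M * Br) = 1 := by
    have h := hUU
    rw [hU, Matrix.transpose_mul] at h
    calc Brᵀ * (M * Br) = Brᵀ * Prᵀ * (Pr * Br) := by rw [hM]; simp only [Matrix.mul_assoc]
      _ = 1 := h
  have h2 : (Brᵀ)⁻¹ = M * Br := Matrix.inv_eq_right_inv h1
  have h3 : M * (Br * Brᵀ) = 1 := by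
    rw [← mul_assoc, ← h2, Matrix.nonsing_inv_mul _ hdet]
  have hMinv : M⁻¹ = Br * Brᵀ := Matrix.inv_eq_right_inv h3
  -- row sum of squares equals quadratic form
  have hrow : ∑ k, (U i k) ^ 2 = x ⬝ᵥ (M⁻¹ *ᵥ x) := by
    rw [hMinv, ← mulVec_mulVec, Matrix.dotProduct_mulVec x Br, ← mulVec_transpose Br x]
    simp only [hU, dotProduct, Matrix.mulVec, Matrix.mul_apply, sq, hx,
      Matrix.transpose_apply, dotProduct]
    have hcomm : ∀ k : Fin K, ∑ j, Pr i j * Br j k = ∑ j, Br j k * Pr i j :=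
      fun k => Finset.sum_congr rfl fun j _ => mul_comm _ _
    simp only [hcomm]
  -- bounds on ‖x‖²
  have hxx : x ⬝ᵥ x = ∑ j, (Pr i j)^2 := by simp [dotProduct, sq, hx]
  have hle1 : ∀ j, Pr i j ≤ 1 := fun j => by
    rw [← hsum i]
    exact Finset.single_le_sum (fun k _ => hnn i k) (mem_univ j)
  have hx_ub : x ⬝ᵥ x ≤ 1 := by
    rw [hxx, ← hsum i]
    exact Finset.sum_le_sum fun j _ => by nlinarith [hnn i j, hle1 j]
  have hx_lb : 1 / (K : ℝ) ≤ x ⬝ᵥ x := by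
    have hcs : (∑ j, Pr i j) ^ 2 ≤ (Finset.univ : Finset (Fin K)).card * ∑ j, (Pr i j)^2 :=
      sq_sum_le_card_mul_sum_sq
    rw [hsum i, one_pow, Finset.card_univ, Fintype.card_fin] at hcs
    rw [hxx, div_le_iff₀ (by exact_mod_cast hK)]
    linarith [hcs]
  obtain ⟨hinf_pos, hsup_pos, hray_lb, hray_ub⟩ := rayleigh_inv hK hPP hPD x
  have hKpos : (0:ℝ) < K := by exact_mod_cast hK
  constructor
  · apply Real.sqrt_le_sqrt
    rw [hrow]
    calc 1 / ((K : ℝ) * ⨆ j, hPP.eigenvalues j)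
        = (⨆ j, hPP.eigenvalues j)⁻¹ * (1 / K) := by
          field_simp
      _ ≤ (⨆ j, hPP.eigenvalues j)⁻¹ * (x ⬝ᵥ x) :=
          mul_le_mul_of_nonneg_left hx_lb (inv_nonneg.mpr hsup_pos.le)
      _ ≤ x ⬝ᵥ (M⁻¹ *ᵥ x) := hray_lb
  · apply Real.sqrt_le_sqrt
    rw [hrow]
    calc x ⬝ᵥ (M⁻¹ *ᵥ x) ≤ (⨅ j, hPP.eigenvalues j)⁻¹ * (x ⬝ᵥ x) := hray_ub
      _ ≤ (⨅ j, hPP.eigenvalues j)⁻¹ * 1 :=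
          mul_le_mul_of_nonneg_left hx_ub (inv_nonneg.mpr hinf_pos.le)
      _ = 1 / ⨅ j, hPP.eigenvalues j := by rw [mul_one, one_div]
end

section
/- Identifiability of DiMMSB: Suppose Ω = Π_r P Π_c' = Π̃_r P̃ Π̃_c' where rank(P) = rank(P̃) = K, Π_r, Π_c, Π̃_r, Π̃_c are membership matrices (rows are PMFs), and each of the K row communities and K column communities contains at least one pure node for both parameterizations, with the pure node index sets I_r, I_c satisfying Π_r(I_r,:) = I_K, Π_c(I_c,:) = I_K and likewise for the tilde parameters. Then there exist K×K permutation matrices M_r, M_c such that Π_r = Π̃_r M_r, Π_c = Π̃_c M_c, and P̃ = M_r' P M_c (i.e., the parameters are unique up to permutation of community labels). -/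
open Matrix Finset

/-- The K×K permutation matrix of a permutation σ. -/
def permMatrix {K : ℕ} (σ : Equiv.Perm (Fin K)) : Matrix (Fin K) (Fin K) ℝ :=
  Matrix.of fun i j => if σ i = j then (1 : ℝ) else 0

lemma permMatrix_inv_mul {K : ℕ} (σ : Equiv.Perm (Fin K)) :
    permMatrix σ⁻¹ * permMatrix σ = 1 := by
  ext i j
  simp only [permMatrix, Matrix.mul_apply, Matrix.of_apply, Matrix.one_apply,
    ite_mul, one_mul, zero_mul]
  rw [Finset.sum_ite_eq Finset.univ (σ⁻¹ i)]
  simp [Equiv.Perm.inv_def, Equiv.symm_apply_eq, eq_comm]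

lemma cancelL {n m : ℕ} {P : Matrix (Fin n) (Fin n) ℝ} (hP : IsUnit P)
    {X Y : Matrix (Fin n) (Fin m) ℝ} (h : P * X = P * Y) : X = Y := by
  obtain ⟨iP⟩ := hP.nonempty_invertible
  calc X = ⅟P * P * X := by rw [invOf_mul_self, Matrix.one_mul]
  _ = ⅟P * (P * Y) := by rw [Matrix.mul_assoc, h]
  _ = Y := by rw [← Matrix.mul_assoc, invOf_mul_self, Matrix.one_mul]

lemma cancelR {n m : ℕ} {P : Matrix (Fin n) (Fin n) ℝ} (hP : IsUnit P)
    {X Y : Matrix (Fin m) (Fin n) ℝ} (h : X * P = Y * P) : X = Y := by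
  obtain ⟨iP⟩ := hP.nonempty_invertible
  calc X = X * P * ⅟P := by rw [Matrix.mul_assoc, mul_invOf_self, Matrix.mul_one]
  _ = Y * (P * ⅟P) := by rw [← Matrix.mul_assoc, h, Matrix.mul_assoc]
  _ = Y := by rw [mul_invOf_self, Matrix.mul_one]

lemma sub3 {nr nc K a b : ℕ} (Pr : Matrix (Fin nr) (Fin K) ℝ)
    (P : Matrix (Fin K) (Fin K) ℝ) (Pc : Matrix (Fin nc) (Fin K) ℝ)
    (f : Fin a → Fin nr) (g : Fin b → Fin nc) :
    (Pr * P * Pcᵀ).submatrix f g = Pr.submatrix f id * P * (Pc.submatrix g id)ᵀ := by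
  ext i j
  simp [Matrix.mul_apply, Finset.sum_mul]

lemma stoch_perm {K : ℕ} {B D : Matrix (Fin K) (Fin K) ℝ}
    (hBn : ∀ i k, 0 ≤ B i k) (hBs : ∀ i, ∑ k, B i k = 1)
    (hDn : ∀ i k, 0 ≤ D i k) (hDs : ∀ i, ∑ k, D i k = 1)
    (hBD : B * D = 1) :
    ∃ σ : Equiv.Perm (Fin K), B = permMatrix σ ∧ D = permMatrix σ⁻¹ := by
  have hDB : D * B = 1 := mul_eq_one_comm.mp hBD
  have offBD : ∀ i j k, i ≠ j → B i k * D k j = 0 := by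
    intro i j k hij
    have h0 : ∑ l, B i l * D l j = 0 := by
      have h1 : (B * D) i j = (1 : Matrix (Fin K) (Fin K) ℝ) i j := by rw [hBD]
      rw [Matrix.mul_apply] at h1
      rw [h1, Matrix.one_apply_ne hij]
    exact (Finset.sum_eq_zero_iff_of_nonneg
      (fun l _ => mul_nonneg (hBn i l) (hDn l j))).mp h0 k (mem_univ k)
  have offDB : ∀ i j k, i ≠ j → D i k * B k j = 0 := by
    intro i j k hij
    have h0 : ∑ l, D i l * B l j = 0 := by
      have h1 : (D * B) i j = (1 : Matrix (Fin K) (Fin K) ℝ) i j := by rw [hDB]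
      rw [Matrix.mul_apply] at h1
      rw [h1, Matrix.one_apply_ne hij]
    exact (Finset.sum_eq_zero_iff_of_nonneg
      (fun l _ => mul_nonneg (hDn i l) (hBn l j))).mp h0 k (mem_univ k)
  have hex : ∀ i, ∃ k, 0 < B i k := by
    intro i
    by_contra h
    push_neg at h
    have hz : ∀ k, B i k = 0 := fun k => le_antisymm (h k) (hBn i k)
    have := hBs i
    simp [hz] at this
  choose f hf using hex
  have hD0 : ∀ i j, j ≠ i → D (f i) j = 0 := by
    intro i j hj
    rcases mul_eq_zero.mp (offBD i j (f i) hj.symm) with h | h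
    · exact absurd h (ne_of_gt (hf i))
    · exact h
  have hD1 : ∀ i, D (f i) i = 1 := by
    intro i
    have h := hDs (f i)
    rwa [Finset.sum_eq_single i (fun j _ hj => hD0 i j hj) (by simp)] at h
  have hB0 : ∀ i m, m ≠ f i → B i m = 0 := by
    intro i m hm
    have h := offDB (f i) m i hm.symm
    rw [hD1 i, one_mul] at h
    exact h
  have finj : Function.Injective f := by
    intro i i' h
    by_contra hne
    have hDi' : D (f i) i' = 1 := by rw [h]; exact hD1 i'
    have h2 : ∑ j ∈ ({i, i'} : Finset (Fin K)), D (f i) j ≤ ∑ j, D (f i) j :=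
      Finset.sum_le_sum_of_subset_of_nonneg (subset_univ _) (fun j _ _ => hDn _ _)
    rw [Finset.sum_pair hne, hD1 i, hDi', hDs (f i)] at h2
    linarith
  have hB1 : ∀ i, B i (f i) = 1 := by
    intro i
    have h := hBs i
    rwa [Finset.sum_eq_single (f i) (fun m _ hm => hB0 i m hm) (by simp)] at h
  let σ : Equiv.Perm (Fin K) :=
    Equiv.ofBijective f ((Fintype.bijective_iff_injective_and_card f).mpr ⟨finj, rfl⟩)
  have hσ : ∀ i, σ i = f i := fun i => rfl
  refine ⟨σ, ?_, ?_⟩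
  · ext i j
    simp only [permMatrix, Matrix.of_apply, hσ]
    by_cases h : f i = j
    · rw [if_pos h, ← h]
      exact hB1 i
    · rw [if_neg h]
      exact hB0 i j (fun hh => h hh.symm)
  · ext k j
    simp only [permMatrix, Matrix.of_apply]
    have hk : f (σ.symm k) = k := σ.apply_symm_apply k
    by_cases h : σ⁻¹ k = j
    · rw [if_pos h, ← h]
      have h1 := hD1 (σ.symm k)
      rw [hk] at h1
      exact h1
    · rw [if_neg h]
      have hne : j ≠ σ.symm k := fun hh => h hh.symm
      calc D k j = D (f (σ.symm k)) j := by rw [hk]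
      _ = 0 := hD0 _ _ hne

/-- Identifiability of DiMMSB. If Π_r P Π_c' = Π̃_r P̃ Π̃_c' for two sets of
parameters, each with invertible K×K mixing matrix, membership matrices whose rows are
PMFs, and pure nodes in every row and column community, then the parameters agree up to
permutation of community labels. -/
theorem dimmsb_identifiability {nr nc K : ℕ}
    (Pr Qr : Matrix (Fin nr) (Fin K) ℝ) (Pc Qc : Matrix (Fin nc) (Fin K) ℝ)
    (P Q : Matrix (Fin K) (Fin K) ℝ)
    (hPrn : ∀ i k, 0 ≤ Pr i k) (hPrs : ∀ i, ∑ k, Pr i k = 1)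
    (hPcn : ∀ j k, 0 ≤ Pc j k) (hPcs : ∀ j, ∑ k, Pc j k = 1)
    (hQrn : ∀ i k, 0 ≤ Qr i k) (hQrs : ∀ i, ∑ k, Qr i k = 1)
    (hQcn : ∀ j k, 0 ≤ Qc j k) (hQcs : ∀ j, ∑ k, Qc j k = 1)
    (hP : IsUnit P) (hQ : IsUnit Q)
    (Ir : Fin K → Fin nr) (hIr : Pr.submatrix Ir id = 1)
    (Ic : Fin K → Fin nc) (hIc : Pc.submatrix Ic id = 1)
    (Jr : Fin K → Fin nr) (hJr : Qr.submatrix Jr id = 1)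
    (Jc : Fin K → Fin nc) (hJc : Qc.submatrix Jc id = 1)
    (hOm : Pr * P * Pcᵀ = Qr * Q * Qcᵀ) :
    ∃ σr σc : Equiv.Perm (Fin K),
      Pr = Qr * permMatrix σr ∧ Pc = Qc * permMatrix σc ∧
      Q = permMatrix σr * P * (permMatrix σc)ᵀ := by
  set A := Qr.submatrix Ir id with hAdef
  set B := Qc.submatrix Ic id with hBdef
  set C := Pr.submatrix Jr id with hCdef
  set D := Pc.submatrix Jc id with hDdef
  have eII : P = A * Q * Bᵀ := by
    have h := congrArg (fun M => M.submatrix Ir Ic) hOm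
    simp only [sub3] at h
    rw [hIr, hIc] at h
    simpa [Matrix.transpose_one, -Matrix.transpose_submatrix] using h
  have eJJ : C * P * Dᵀ = Q := by
    have h := congrArg (fun M => M.submatrix Jr Jc) hOm
    simp only [sub3] at h
    rw [hJr, hJc] at h
    simpa [Matrix.transpose_one, -Matrix.transpose_submatrix] using h
  have eIJ : P * Dᵀ = A * Q := by
    have h := congrArg (fun M => M.submatrix Ir Jc) hOm
    simp only [sub3] at h
    rw [hIr, hJc] at h
    simpa [Matrix.transpose_one, -Matrix.transpose_submatrix] using h
  have eJI : C * P = Q * Bᵀ := by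
    have h := congrArg (fun M => M.submatrix Jr Ic) hOm
    simp only [sub3] at h
    rw [hJr, hIc] at h
    simpa [Matrix.transpose_one, -Matrix.transpose_submatrix] using h
  have e_I : Pr * P = Qr * Q * Bᵀ := by
    have h := congrArg (fun M => M.submatrix id Ic) hOm
    simp only [sub3] at h
    rw [hIc] at h
    simpa [Matrix.transpose_one, -Matrix.transpose_submatrix] using h
  have eI_ : P * Pcᵀ = A * Q * Qcᵀ := by
    have h := congrArg (fun M => M.submatrix Ir id) hOm
    simp only [sub3] at h
    rw [hIr] at h
    simpa [Matrix.transpose_one] using h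
  -- B * D = 1
  have hDtBt : Dᵀ * Bᵀ = 1 := by
    apply cancelL hP
    rw [Matrix.mul_one, ← Matrix.mul_assoc, eIJ]
    exact eII.symm
  have hBD : B * D = 1 := by
    have h := congrArg Matrix.transpose hDtBt
    simpa [Matrix.transpose_mul] using h
  -- A * C = 1
  have hAC : A * C = 1 := by
    apply cancelR hP
    rw [Matrix.one_mul, Matrix.mul_assoc, eJI, ← Matrix.mul_assoc]
    exact eII.symm
  have hAn : ∀ i k, 0 ≤ A i k := fun i k => hQrn (Ir i) k
  have hAs : ∀ i, ∑ k, A i k = 1 := fun i => hQrs (Ir i)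
  have hCn : ∀ i k, 0 ≤ C i k := fun i k => hPrn (Jr i) k
  have hCs : ∀ i, ∑ k, C i k = 1 := fun i => hPrs (Jr i)
  have hBn : ∀ i k, 0 ≤ B i k := fun i k => hQcn (Ic i) k
  have hBs : ∀ i, ∑ k, B i k = 1 := fun i => hQcs (Ic i)
  have hDn : ∀ i k, 0 ≤ D i k := fun i k => hPcn (Jc i) k
  have hDs : ∀ i, ∑ k, D i k = 1 := fun i => hPcs (Jc i)
  obtain ⟨τ, hA, hC⟩ := stoch_perm (B := A) (D := C) hAn hAs hCn hCs hAC
  obtain ⟨β, hB, hD⟩ := stoch_perm (B := B) (D := D) hBn hBs hDn hDs hBD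
  refine ⟨τ⁻¹, β⁻¹, ?_, ?_, ?_⟩
  · -- Pr = Qr * permMatrix τ⁻¹
    have hQB : Q * Bᵀ = permMatrix τ⁻¹ * P := by
      rw [eII, hA, ← Matrix.mul_assoc, ← Matrix.mul_assoc, permMatrix_inv_mul,
        Matrix.one_mul]
    apply cancelR hP
    calc Pr * P = Qr * Q * Bᵀ := e_I
    _ = Qr * (Q * Bᵀ) := Matrix.mul_assoc _ _ _
    _ = Qr * (permMatrix τ⁻¹ * P) := by rw [hQB]
    _ = Qr * permMatrix τ⁻¹ * P := (Matrix.mul_assoc _ _ _).symm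
  · -- Pc = Qc * permMatrix β⁻¹
    have h2 : Pcᵀ = Dᵀ * Qcᵀ := by
      apply cancelL hP
      calc P * Pcᵀ = A * Q * Qcᵀ := eI_
      _ = (P * Dᵀ) * Qcᵀ := by rw [eIJ]
      _ = P * (Dᵀ * Qcᵀ) := Matrix.mul_assoc _ _ _
    have h3 : Pc = Qc * D := by
      have h := congrArg Matrix.transpose h2
      simpa [Matrix.transpose_mul] using h
    rw [h3, hD]
  · -- Q = permMatrix τ⁻¹ * P * (permMatrix β⁻¹)ᵀ
    rw [← eJJ, hC, hD]
end
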